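/- Let n, l be integers with n ≥ 2 and l ≥ 2, and let j be an integer with 1 ≤ j ≤ n-1. Then l^(n-j) divides the binomial coefficient C(l^(n-1), j). -/

import Mathlib

theorem stmt_6 (n l j : ℕ) (hn : 2 ≤ n) (hl : 2 ≤ l) (hj1 : 1 ≤ j) (hj2 : j ≤ n - 1) :
    l ^ (n - j) ∣ (l ^ (n - 1)).choose j := by
  set m := l ^ (n - 1) with hm
  have hl0 : 0 < l := by omega
  have hjm : j < m := by
    calc j ≤ n - 1 := hj2
    _ < 2 ^ (n - 1) := Nat.lt_two_pow_self
    _ ≤ l ^ (n - 1) := Nat.pow_le_pow_left hl _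
  have hjm : j ≤ m := hjm.le
  have hC0 : 0 < m.choose j := Nat.choose_pos hjm
  -- key divisibility: l^(n-1) ∣ j * C
  have hkey : l ^ (n - 1) ∣ j * m.choose j := by
    have h := Nat.add_one_mul_choose_eq (m - 1) (j - 1)
    have hm1 : m - 1 + 1 = m := by
      have : 0 < m := Nat.pow_pos hl0
      omega
    have hj1' : j - 1 + 1 = j := by omega
    rw [hm1, hj1'] at h
    exact ⟨(m - 1).choose (j - 1), by rw [mul_comm j _, ← h, hm]⟩
  -- move to factorizations
  have hln0 : l ^ (n - j) ≠ 0 := by positivity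
  have hC0' : m.choose j ≠ 0 := hC0.ne'
  rw [← Nat.factorization_le_iff_dvd hln0 hC0']
  intro p
  rw [Nat.factorization_pow]
  simp only [Finsupp.smul_apply, smul_eq_mul]
  set a := l.factorization p with ha
  set b := j.factorization p with hb
  set c := (m.choose j).factorization p with hc
  rcases Nat.eq_zero_or_pos a with h0 | hpos
  · simp [h0]
  -- v_p(l^(n-1)) ≤ v_p(j * C)
  have h2 : (n - 1) * a ≤ b + c := by
    have := (Nat.factorization_le_iff_dvd (by positivity) (by positivity)).2 hkey p
    rwa [Nat.factorization_pow, Nat.factorization_mul (by omega) hC0', Finsupp.smul_apply,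
      smul_eq_mul, Finsupp.add_apply] at this
  -- b ≤ j - 1
  have h3 : b ≤ j - 1 := by
    by_cases hp : p.Prime
    · have hdvd : p ^ b ∣ j := Nat.ordProj_dvd j p
      have hle : p ^ b ≤ j := Nat.le_of_dvd (by omega) hdvd
      have : 2 ^ b ≤ p ^ b := Nat.pow_le_pow_left hp.two_le _
      have hblt : b < 2 ^ b := Nat.lt_two_pow_self
      omega
    · simp [hb, Nat.factorization_eq_zero_of_not_prime _ hp]
  have h4 : j - 1 ≤ (j - 1) * a := Nat.le_mul_of_pos_right _ hpos
  have h5 : (n - j) * a + (j - 1) * a = (n - 1) * a := by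
    rw [← Nat.add_mul]; congr 1; omega
  omega
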